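/- (Stability / continuous dependence on initial data, Theorem 5.2.) Under the model hypotheses, let U and V be solutions of the integral invariant model with initial data Ũ₀ and Ṽ₀ respectively, where Ũ₀, Ṽ₀ ∈ L²(ℝ^d) vanish almost everywhere outside Ω̃(0). Then for every t ∈ [0,T], ‖U(·,t) − V(·,t)‖_{L²(Ω̃(t))} ≤ e^{M_A T/2}·‖Ũ₀ − Ṽ₀‖_{L²(Ω̃(0))}; in particular the fluctuation of solutions induced by an initial perturbation is uniformly bounded in L² over all times. -/

import Mathlib

open MeasureTheory
open scoped RealInnerProductSpace NNReal ENNReal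

set_option maxHeartbeats 1000000

section AuxLemmas

open Set Metric

/-- A `K`-Lipschitz map of `d`-dimensional Euclidean space increases volume by at most `K ^ d`. -/
lemma volume_image_le_pow_mul {d : ℕ} {K : ℝ≥0}
    {f : EuclideanSpace ℝ (Fin d) → EuclideanSpace ℝ (Fin d)}
    (hf : LipschitzWith K f) (s : Set (EuclideanSpace ℝ (Fin d))) :
    volume (f '' s) ≤ (K : ℝ≥0∞) ^ d * volume s := by
  have hball : ∀ (x : EuclideanSpace ℝ (Fin d)) (r : ℝ), 0 ≤ r →
      volume (f '' closedBall x r) ≤ (K : ℝ≥0∞) ^ d * volume (closedBall x r) := by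
    intro x r hr
    have h1 : f '' closedBall x r ⊆ closedBall (f x) (K * r) := by
      rintro - ⟨y, hy, rfl⟩
      exact mem_closedBall.2 ((hf.dist_le_mul y x).trans
        (mul_le_mul_of_nonneg_left (mem_closedBall.1 hy) K.coe_nonneg))
    refine (measure_mono h1).trans ?_
    rw [Measure.addHaar_closedBall _ _ (by positivity), Measure.addHaar_closedBall _ _ hr,
      finrank_euclideanSpace_fin, mul_pow, ENNReal.ofReal_mul (by positivity), mul_assoc,
      ENNReal.ofReal_pow K.coe_nonneg]
    simp
  have main : ∀ ε : ℝ≥0∞, ε ≠ 0 → volume (f '' s) ≤ (K : ℝ≥0∞) ^ d * (volume s + ε) := by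
    intro ε hε
    obtain ⟨t, r, htc, hts, hrt, hcov, hsum⟩ :=
      Besicovitch.exists_closedBall_covering_tsum_measure_le volume hε (fun _ => Ioi 0) s
        (fun x _ δ hδ => ⟨δ / 2, half_pos hδ, half_pos hδ, half_lt_self hδ⟩)
    have h1 : f '' s ⊆ ⋃ x ∈ t, f '' closedBall x (r x) := by
      refine (Set.image_mono hcov).trans ?_
      rw [Set.image_iUnion₂]
    calc volume (f '' s) ≤ volume (⋃ x ∈ t, f '' closedBall x (r x)) := measure_mono h1
      _ ≤ ∑' x : t, volume (f '' closedBall (x : EuclideanSpace ℝ (Fin d)) (r x)) := measure_biUnion_le volume htc _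
      _ ≤ ∑' x : t, (K : ℝ≥0∞) ^ d * volume (closedBall (x : EuclideanSpace ℝ (Fin d)) (r x)) :=
          ENNReal.tsum_le_tsum fun x => hball x (r x) (le_of_lt (hrt x x.2))
      _ = (K : ℝ≥0∞) ^ d * ∑' x : t, volume (closedBall (x : EuclideanSpace ℝ (Fin d)) (r x)) := ENNReal.tsum_mul_left
      _ ≤ (K : ℝ≥0∞) ^ d * (volume s + ε) := mul_le_mul_right hsum _
  rcases eq_or_ne ((K : ℝ≥0∞) ^ d) 0 with hK0 | hK0
  · have h := (main 1 one_ne_zero).trans_eq (by rw [hK0, zero_mul])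
    simpa [hK0] using h
  refine ENNReal.le_of_forall_pos_le_add fun δ hδ _ => ?_
  have hKtop : (K : ℝ≥0∞) ^ d ≠ ⊤ := ENNReal.pow_ne_top ENNReal.coe_ne_top
  have hne : ((δ : ℝ≥0∞) / (K : ℝ≥0∞) ^ d) ≠ 0 := by
    simp [ENNReal.div_eq_zero_iff, hδ.ne', hKtop]
  refine (main _ hne).trans ?_
  rw [mul_add]
  exact add_le_add_right ENNReal.mul_div_le _

/-- Pushforward of a restricted volume under a map with a Lipschitz left inverse. -/
lemma map_restrict_le_smul {d : ℕ} {φ ρ : EuclideanSpace ℝ (Fin d) → EuclideanSpace ℝ (Fin d)}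
    (hφ : Measurable φ) {K : ℝ≥0} (hρ : LipschitzWith K ρ)
    {s u : Set (EuclideanSpace ℝ (Fin d))}
    (hmaps : ∀ x ∈ s, φ x ∈ u) (hinv : ∀ x ∈ s, ρ (φ x) = x) :
    (volume.restrict s).map φ ≤ ((K : ℝ≥0∞) ^ d) • volume.restrict u := by
  refine Measure.le_iff.2 fun S hS => ?_
  rw [Measure.map_apply hφ hS, Measure.restrict_apply (hφ hS), Measure.smul_apply,
    Measure.restrict_apply hS, smul_eq_mul]
  have hsub : φ ⁻¹' S ∩ s ⊆ ρ '' (S ∩ u) := by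
    rintro x ⟨hxS, hxs⟩
    exact ⟨φ x, ⟨hxS, hmaps x hxs⟩, hinv x hxs⟩
  exact (measure_mono hsub).trans (volume_image_le_pow_mul hρ _)

lemma setLIntegral_comp_le {d : ℕ} {φ ρ : EuclideanSpace ℝ (Fin d) → EuclideanSpace ℝ (Fin d)}
    (hφ : Continuous φ) {K : ℝ≥0} (hρ : LipschitzWith K ρ)
    {s u : Set (EuclideanSpace ℝ (Fin d))}
    (hmaps : ∀ x ∈ s, φ x ∈ u) (hinv : ∀ x ∈ s, ρ (φ x) = x)
    {h : EuclideanSpace ℝ (Fin d) → ℝ≥0∞} (hh : AEMeasurable h (volume.restrict u)) :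
    ∫⁻ x in s, h (φ x) ∂volume ≤ (K : ℝ≥0∞) ^ d * ∫⁻ x in u, h x ∂volume := by
  have hle := map_restrict_le_smul hφ.measurable hρ hmaps hinv
  have hac : (volume.restrict s).map φ ≪ volume.restrict u :=
    (Measure.absolutelyContinuous_of_le hle).trans Measure.smul_absolutelyContinuous
  rw [← lintegral_map' (hh.mono_ac hac) hφ.aemeasurable]
  calc ∫⁻ y, h y ∂((volume.restrict s).map φ)
      ≤ ∫⁻ y, h y ∂(((K : ℝ≥0∞) ^ d) • volume.restrict u) := lintegral_mono' hle le_rfl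
    _ = (K : ℝ≥0∞) ^ d * ∫⁻ x in u, h x ∂volume := lintegral_smul_measure _ _

lemma aestronglyMeasurable_comp_of_inv {d : ℕ}
    {φ ρ : EuclideanSpace ℝ (Fin d) → EuclideanSpace ℝ (Fin d)}
    (hφ : Continuous φ) {K : ℝ≥0} (hρ : LipschitzWith K ρ)
    {s u : Set (EuclideanSpace ℝ (Fin d))}
    (hmaps : ∀ x ∈ s, φ x ∈ u) (hinv : ∀ x ∈ s, ρ (φ x) = x)
    {g : EuclideanSpace ℝ (Fin d) → ℝ} (hg : AEStronglyMeasurable g (volume.restrict u)) :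
    AEStronglyMeasurable (fun x => g (φ x)) (volume.restrict s) := by
  have hle := map_restrict_le_smul hφ.measurable hρ hmaps hinv
  have hac : (volume.restrict s).map φ ≪ volume.restrict u :=
    (Measure.absolutelyContinuous_of_le hle).trans Measure.smul_absolutelyContinuous
  exact (hg.mono_ac hac).comp_aemeasurable hφ.aemeasurable

lemma eLpNorm_two_eq {α : Type*} [MeasurableSpace α] (f : α → ℝ) (μ : Measure α) :
    eLpNorm f 2 μ = (∫⁻ x, ((‖f x‖₊ : ℝ≥0∞)) ^ (2 : ℕ) ∂μ) ^ (1 / 2 : ℝ) := by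
  rw [eLpNorm_eq_lintegral_rpow_enorm_toReal (two_ne_zero) ENNReal.ofNat_ne_top]
  have h2 : ((2 : ℝ≥0∞)).toReal = (2 : ℝ) := by simp
  have hpt : ∀ x : ℝ≥0∞, x ^ (2 : ℝ) = x ^ (2 : ℕ) := fun x => by
    rw [show (2 : ℝ) = ((2 : ℕ) : ℝ) by norm_num, ENNReal.rpow_natCast]
  simp only [h2, hpt, enorm_eq_nnnorm]

/-- Grönwall two-trajectory estimate, forward in time. -/
lemma gronwall_fwd {F : Type*} [NormedAddCommGroup F] [NormedSpace ℝ F]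
    {v : ℝ → F → F} {K : ℝ≥0} (hv : ∀ τ, LipschitzWith K (v τ))
    {f g : ℝ → F} {a b : ℝ} (hab : a ≤ b)
    (hf : ∀ τ ∈ Set.Icc a b, HasDerivWithinAt f (v τ (f τ)) (Set.Icc a b) τ)
    (hg : ∀ τ ∈ Set.Icc a b, HasDerivWithinAt g (v τ (g τ)) (Set.Icc a b) τ) :
    dist (f b) (g b) ≤ dist (f a) (g a) * Real.exp (K * (b - a)) := by
  have hfc : ContinuousOn f (Set.Icc a b) := fun τ hτ => (hf τ hτ).continuousWithinAt
  have hgc : ContinuousOn g (Set.Icc a b) := fun τ hτ => (hg τ hτ).continuousWithinAt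
  have hf' : ∀ τ ∈ Set.Ico a b, HasDerivWithinAt f (v τ (f τ)) (Set.Ici τ) τ := fun τ hτ =>
    (hf τ (Set.Ico_subset_Icc_self hτ)).mono_of_mem_nhdsWithin (Icc_mem_nhdsGE_of_mem hτ)
  have hg' : ∀ τ ∈ Set.Ico a b, HasDerivWithinAt g (v τ (g τ)) (Set.Ici τ) τ := fun τ hτ =>
    (hg τ (Set.Ico_subset_Icc_self hτ)).mono_of_mem_nhdsWithin (Icc_mem_nhdsGE_of_mem hτ)
  exact dist_le_of_trajectories_ODE hv hfc hf' hgc hg' le_rfl b ⟨hab, le_rfl⟩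

/-- Grönwall two-trajectory estimate, backward in time. -/
lemma gronwall_bwd {F : Type*} [NormedAddCommGroup F] [NormedSpace ℝ F]
    {v : ℝ → F → F} {K : ℝ≥0} (hv : ∀ τ, LipschitzWith K (v τ))
    {f g : ℝ → F} {a b : ℝ} (hab : a ≤ b)
    (hf : ∀ τ ∈ Set.Icc a b, HasDerivWithinAt f (v τ (f τ)) (Set.Icc a b) τ)
    (hg : ∀ τ ∈ Set.Icc a b, HasDerivWithinAt g (v τ (g τ)) (Set.Icc a b) τ) :
    dist (f a) (g a) ≤ dist (f b) (g b) * Real.exp (K * (b - a)) := by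
  set w : ℝ → F → F := fun τ x => -v (a + b - τ) x with hw
  have hvw : ∀ τ, LipschitzWith K (w τ) := fun τ =>
    LipschitzWith.of_dist_le_mul fun x y => by
      simpa [w, dist_neg_neg] using (hv (a + b - τ)).dist_le_mul x y
  have hrev : ∀ h : ℝ → F, (∀ τ ∈ Set.Icc a b, HasDerivWithinAt h (v τ (h τ)) (Set.Icc a b) τ) →
      ∀ τ ∈ Set.Icc a b,
        HasDerivWithinAt (fun σ => h (a + b - σ)) (w τ ((fun σ => h (a + b - σ)) τ))
          (Set.Icc a b) τ := by
    intro h hh τ hτ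
    have h1 : HasDerivWithinAt (fun σ : ℝ => a + b - σ) (-1) (Set.Icc a b) τ := by
      simpa using (hasDerivWithinAt_id τ (Set.Icc a b)).const_sub (a + b)
    have h2 := hh (a + b - τ) ⟨by linarith [hτ.1, hτ.2], by linarith [hτ.1, hτ.2]⟩
    have h3 := HasDerivWithinAt.scomp (x := τ) h2 h1
      (fun σ hσ => ⟨by linarith [hσ.1, hσ.2], by linarith [hσ.1, hσ.2]⟩)
    simpa [w, Function.comp_def] using h3
  have := gronwall_fwd hvw hab (hrev f hf) (hrev g hg)
  simpa using this

end AuxLemmas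

/-- `U` is a solution of the integral invariant model on `[0,T]` with moving domain
`Ω̃(t) = D^A_{T→t}(Ω)` and initial datum `U₀`. -/
def IsSolutionIIM (d : ℕ) (T : ℝ)
    (D : ℝ → ℝ → EuclideanSpace ℝ (Fin d) → EuclideanSpace ℝ (Fin d))
    (Ω : Set (EuclideanSpace ℝ (Fin d)))
    (U₀ : EuclideanSpace ℝ (Fin d) → ℝ)
    (U : EuclideanSpace ℝ (Fin d) → ℝ → ℝ) : Prop :=
  (∀ t ∈ Set.Icc (0:ℝ) T,
      MemLp (fun x => U x t) 2 (volume.restrict (D T t '' Ω))) ∧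
  (∀ᵐ x ∂(volume.restrict (D T 0 '' Ω)), U x 0 = U₀ x) ∧
  (∀ Ψ : EuclideanSpace ℝ (Fin d) → ℝ, MemLp Ψ 2 volume →
    (∀ᵐ x ∂(volume : Measure (EuclideanSpace ℝ (Fin d))), x ∉ Ω → Ψ x = 0) →
    ∀ t ∈ Set.Icc (0:ℝ) T,
      ∫ x in D T t '' Ω, U x t * Ψ (D t T x)
        = ∫ x in D T 0 '' Ω, U₀ x * Ψ (D 0 T x))

/-- **Stability, Theorem 5.2.** Under the model hypotheses, if `U` and `V` are
solutions of the integral invariant model with initial data `Ũ₀` and `Ṽ₀` (both in `L²(ℝ^d)`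
and vanishing a.e. outside `Ω̃(0)`), then for every `t ∈ [0,T]`,
`‖U(·,t) − V(·,t)‖_{L²(Ω̃(t))} ≤ e^{M_A T/2}‖Ũ₀ − Ṽ₀‖_{L²(Ω̃(0))}`, with `M_A = d·L_A`. -/
theorem IIM_stability
    (d : ℕ) (T L_A : ℝ) (hT : 0 < T) (hL : 0 < L_A)
    (A : EuclideanSpace ℝ (Fin d) → ℝ → EuclideanSpace ℝ (Fin d))
    (hAcont : ContinuousOn (fun p : EuclideanSpace ℝ (Fin d) × ℝ => A p.1 p.2)
      (Set.univ ×ˢ Set.Icc (0:ℝ) T))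
    (hAdiff : ∀ t ∈ Set.Icc (0:ℝ) T, ContDiff ℝ 1 (fun x => A x t))
    (hAgrad : ∀ (x : EuclideanSpace ℝ (Fin d)), ∀ t ∈ Set.Icc (0:ℝ) T,
      ‖fderiv ℝ (fun x => A x t) x‖ ≤ L_A)
    (D : ℝ → ℝ → EuclideanSpace ℝ (Fin d) → EuclideanSpace ℝ (Fin d))
    (hDflow : ∀ x : EuclideanSpace ℝ (Fin d), D T T x = x ∧
      ∀ τ ∈ Set.Icc (0:ℝ) T,
        HasDerivWithinAt (fun σ => D T σ x) (A (D T τ x) τ) (Set.Icc (0:ℝ) T) τ)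
    (hDinv : ∀ t ∈ Set.Icc (0:ℝ) T,
      (∀ x, D t T (D T t x) = x) ∧ (∀ x, D T t (D t T x) = x))
    (hDdiffeo : ∀ t ∈ Set.Icc (0:ℝ) T, ContDiff ℝ 1 (D t T))
    (hDjac : ∀ t ∈ Set.Icc (0:ℝ) T, ∀ x : EuclideanSpace ℝ (Fin d),
      Real.exp (-((d : ℝ) * L_A * (T - t))) ≤ |(fderiv ℝ (D t T) x).det| ∧
      |(fderiv ℝ (D t T) x).det| ≤ Real.exp ((d : ℝ) * L_A * (T - t)))
    (Ω : Set (EuclideanSpace ℝ (Fin d))) (hΩopen : IsOpen Ω)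
    (hΩbd : Bornology.IsBounded Ω)
    (U₀ V₀ : EuclideanSpace ℝ (Fin d) → ℝ)
    (hU₀ : MemLp U₀ 2 volume) (hV₀ : MemLp V₀ 2 volume)
    (hU₀supp : ∀ᵐ x ∂(volume : Measure (EuclideanSpace ℝ (Fin d))),
      x ∉ D T 0 '' Ω → U₀ x = 0)
    (hV₀supp : ∀ᵐ x ∂(volume : Measure (EuclideanSpace ℝ (Fin d))),
      x ∉ D T 0 '' Ω → V₀ x = 0)
    (U V : EuclideanSpace ℝ (Fin d) → ℝ → ℝ)
    (hU : IsSolutionIIM d T D Ω U₀ U) (hV : IsSolutionIIM d T D Ω V₀ V) :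
    ∀ t ∈ Set.Icc (0:ℝ) T,
      (eLpNorm (fun x => U x t - V x t) 2 (volume.restrict (D T t '' Ω))).toReal
        ≤ Real.exp ((d : ℝ) * L_A * T / 2)
          * (eLpNorm (fun x => U₀ x - V₀ x) 2 (volume.restrict (D T 0 '' Ω))).toReal := by
  classical
  intro t Ht
  obtain ⟨hUmem, -, hUinv⟩ := hU
  obtain ⟨hVmem, -, hVinv⟩ := hV
  have h0T : (0:ℝ) ∈ Set.Icc (0:ℝ) T := ⟨le_rfl, hT.le⟩
  -- Lipschitz bound for the velocity field
  have hAlip : ∀ τ ∈ Set.Icc (0:ℝ) T, LipschitzWith L_A.toNNReal (fun x => A x τ) := by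
    intro τ hτ
    refine lipschitzWith_of_nnnorm_fderiv_le ((hAdiff τ hτ).differentiable one_ne_zero) fun x => ?_
    rw [← norm_toNNReal]
    exact Real.toNNReal_mono (hAgrad x τ hτ)
  -- a globally defined velocity field agreeing with `A` on `[0,T]`
  set v : ℝ → EuclideanSpace ℝ (Fin d) → EuclideanSpace ℝ (Fin d) :=
    fun τ x => A x (max 0 (min τ T)) with hv_def
  have hv : ∀ τ, LipschitzWith L_A.toNNReal (v τ) := fun τ =>
    hAlip _ ⟨le_max_left _ _, max_le hT.le (min_le_right _ _)⟩
  have htraj : ∀ x, ∀ τ ∈ Set.Icc (0:ℝ) T,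
      HasDerivWithinAt (fun σ => D T σ x) (v τ (D T τ x)) (Set.Icc (0:ℝ) T) τ := by
    intro x τ hτ
    have hc : max 0 (min τ T) = τ := by rw [min_eq_left hτ.2, max_eq_right hτ.1]
    have h := (hDflow x).2 τ hτ
    simpa [hv_def, hc] using h
  -- Grönwall estimates for the flow, both directions
  have fwd : ∀ a b : ℝ, 0 ≤ a → a ≤ b → b ≤ T → ∀ x y,
      dist (D T b x) (D T b y) ≤ dist (D T a x) (D T a y) * Real.exp (L_A * (b - a)) := by
    intro a b ha hab hb x y
    have hsub : Set.Icc a b ⊆ Set.Icc (0:ℝ) T := Set.Icc_subset_Icc ha hb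
    have h := gronwall_fwd hv hab
      (fun τ hτ => (htraj x τ (hsub hτ)).mono hsub)
      (fun τ hτ => (htraj y τ (hsub hτ)).mono hsub)
    rwa [Real.coe_toNNReal _ hL.le] at h
  have bwd : ∀ a b : ℝ, 0 ≤ a → a ≤ b → b ≤ T → ∀ x y,
      dist (D T a x) (D T a y) ≤ dist (D T b x) (D T b y) * Real.exp (L_A * (b - a)) := by
    intro a b ha hab hb x y
    have hsub : Set.Icc a b ⊆ Set.Icc (0:ℝ) T := Set.Icc_subset_Icc ha hb
    have h := gronwall_bwd hv hab
      (fun τ hτ => (htraj x τ (hsub hτ)).mono hsub)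
      (fun τ hτ => (htraj y τ (hsub hτ)).mono hsub)
    rwa [Real.coe_toNNReal _ hL.le] at h
  -- the uniform Lipschitz constant
  set K : ℝ≥0 := (Real.exp (L_A * T)).toNNReal with hK_def
  have hKcoe : (K : ℝ) = Real.exp (L_A * T) := Real.coe_toNNReal _ (Real.exp_pos _).le
  have hexp_le : ∀ s : ℝ, s ≤ T → Real.exp (L_A * s) ≤ (K : ℝ) := fun s hs => by
    rw [hKcoe]; exact Real.exp_le_exp.2 (by nlinarith)
  have hidT : ∀ x, D T T x = x := fun x => (hDflow x).1
  have lipDTt : LipschitzWith K (D T t) := by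
    refine LipschitzWith.of_dist_le_mul fun x y => ?_
    have h := bwd t T Ht.1 Ht.2 le_rfl x y
    rw [hidT x, hidT y] at h
    refine h.trans ?_
    rw [mul_comm ((K : ℝ)) (dist x y)]
    exact mul_le_mul_of_nonneg_left (hexp_le _ (by linarith [Ht.1])) dist_nonneg
  have lipDT0 : LipschitzWith K (D T 0) := by
    refine LipschitzWith.of_dist_le_mul fun x y => ?_
    have h := bwd 0 T le_rfl hT.le le_rfl x y
    rw [hidT x, hidT y] at h
    refine h.trans ?_
    rw [mul_comm ((K : ℝ)) (dist x y)]
    exact mul_le_mul_of_nonneg_left (hexp_le _ (by linarith)) dist_nonneg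
  have lipDtT : LipschitzWith K (D t T) := by
    refine LipschitzWith.of_dist_le_mul fun x y => ?_
    have h := fwd t T Ht.1 Ht.2 le_rfl (D t T x) (D t T y)
    rw [hidT, hidT, (hDinv t Ht).2 x, (hDinv t Ht).2 y] at h
    refine h.trans ?_
    rw [mul_comm ((K : ℝ)) (dist x y)]
    exact mul_le_mul_of_nonneg_left (hexp_le _ (by linarith [Ht.1])) dist_nonneg
  have lipRho : LipschitzWith K (fun x => D T 0 (D t T x)) := by
    refine LipschitzWith.of_dist_le_mul fun x y => ?_
    have h := bwd 0 t le_rfl Ht.1 Ht.2 (D t T x) (D t T y)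
    rw [(hDinv t Ht).2 x, (hDinv t Ht).2 y] at h
    refine h.trans ?_
    rw [mul_comm ((K : ℝ)) (dist x y)]
    exact mul_le_mul_of_nonneg_left (hexp_le _ (by linarith [Ht.2])) dist_nonneg
  -- the moving domains are open
  set St := D T t '' Ω with hSt_def
  set S0 := D T 0 '' Ω with hS0_def
  have hStOpen : IsOpen St := by
    have hpre : St = D t T ⁻¹' Ω := by
      ext x
      constructor
      · rintro ⟨y, hy, rfl⟩
        rw [Set.mem_preimage, (hDinv t Ht).1 y]
        exact hy
      · intro hx
        exact ⟨D t T x, hx, (hDinv t Ht).2 x⟩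
    rw [hpre]
    exact hΩopen.preimage (hDdiffeo t Ht).continuous
  have hS0Open : IsOpen S0 := by
    have hpre : S0 = D 0 T ⁻¹' Ω := by
      ext x
      constructor
      · rintro ⟨y, hy, rfl⟩
        rw [Set.mem_preimage, (hDinv 0 h0T).1 y]
        exact hy
      · intro hx
        exact ⟨D 0 T x, hx, (hDinv 0 h0T).2 x⟩
    rw [hpre]
    exact hΩopen.preimage (hDdiffeo 0 h0T).continuous
  have hStM : MeasurableSet St := hStOpen.measurableSet
  have hS0M : MeasurableSet S0 := hS0Open.measurableSet
  have hΩM : MeasurableSet Ω := hΩopen.measurableSet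
  -- the difference of the two solutions at time t
  have hWt : MemLp (fun x => U x t - V x t) 2 (volume.restrict St) :=
    (hUmem t Ht).sub (hVmem t Ht)
  -- the test function
  set Ψ : EuclideanSpace ℝ (Fin d) → ℝ :=
    Ω.indicator (fun y => U (D T t y) t - V (D T t y) t) with hΨ_def
  have hmapsΩ : ∀ y ∈ Ω, D T t y ∈ St := fun y hy => Set.mem_image_of_mem _ hy
  have hinvΩ : ∀ y ∈ Ω, D t T (D T t y) = y := fun y _ => (hDinv t Ht).1 y
  have hΨaesm0 : AEStronglyMeasurable (fun y => U (D T t y) t - V (D T t y) t)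
      (volume.restrict Ω) :=
    aestronglyMeasurable_comp_of_inv lipDTt.continuous lipDtT hmapsΩ hinvΩ hWt.1
  have hΨaesm : AEStronglyMeasurable Ψ volume :=
    (aestronglyMeasurable_indicator_iff hΩM).2 hΨaesm0
  have hJfin : ∫⁻ x in St, ((‖U x t - V x t‖₊ : ℝ≥0∞)) ^ (2 : ℕ) ∂volume < ⊤ := by
    have h2 := hWt.2
    rw [eLpNorm_two_eq] at h2
    rcases eq_or_ne (∫⁻ x in St, ((‖U x t - V x t‖₊ : ℝ≥0∞)) ^ (2 : ℕ) ∂volume) ⊤ with hX | hX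
    · rw [hX, ENNReal.top_rpow_of_pos (by norm_num)] at h2
      exact absurd h2 (lt_irrefl _)
    · exact hX.lt_top
  have hKpowTop : ((K : ℝ≥0∞) ^ d) ≠ ⊤ := ENNReal.pow_ne_top ENNReal.coe_ne_top
  have hΨnorm_pt : ∀ y, ((‖Ψ y‖₊ : ℝ≥0∞)) ^ (2 : ℕ)
      = Ω.indicator (fun y => ((‖U (D T t y) t - V (D T t y) t‖₊ : ℝ≥0∞)) ^ (2 : ℕ)) y := by
    intro y
    by_cases hy : y ∈ Ω <;>
      simp [hΨ_def, Set.indicator_of_mem, Set.indicator_of_notMem, hy]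
  have hWtsqmeas : AEMeasurable (fun x => ((‖U x t - V x t‖₊ : ℝ≥0∞)) ^ (2 : ℕ))
      (volume.restrict St) := hWt.1.enorm.pow_const _
  have hΨint : ∫⁻ y, ((‖Ψ y‖₊ : ℝ≥0∞)) ^ (2 : ℕ) ∂volume
      ≤ (K : ℝ≥0∞) ^ d * ∫⁻ x in St, ((‖U x t - V x t‖₊ : ℝ≥0∞)) ^ (2 : ℕ) ∂volume := by
    calc ∫⁻ y, ((‖Ψ y‖₊ : ℝ≥0∞)) ^ (2 : ℕ) ∂volume
        = ∫⁻ y, Ω.indicator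
            (fun y => ((‖U (D T t y) t - V (D T t y) t‖₊ : ℝ≥0∞)) ^ (2 : ℕ)) y ∂volume :=
          lintegral_congr hΨnorm_pt
      _ = ∫⁻ y in Ω, ((‖U (D T t y) t - V (D T t y) t‖₊ : ℝ≥0∞)) ^ (2 : ℕ) ∂volume :=
          lintegral_indicator hΩM _
      _ ≤ (K : ℝ≥0∞) ^ d * ∫⁻ x in St, ((‖U x t - V x t‖₊ : ℝ≥0∞)) ^ (2 : ℕ) ∂volume :=
          setLIntegral_comp_le lipDTt.continuous lipDtT hmapsΩ hinvΩ hWtsqmeas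
  have hΨmem : MemLp Ψ 2 volume := by
    refine ⟨hΨaesm, ?_⟩
    rw [eLpNorm_two_eq]
    exact ENNReal.rpow_lt_top_of_nonneg (by norm_num)
      (lt_of_le_of_lt hΨint (ENNReal.mul_lt_top hKpowTop.lt_top hJfin)).ne
  have hΨsupp : ∀ᵐ x ∂(volume : Measure (EuclideanSpace ℝ (Fin d))), x ∉ Ω → Ψ x = 0 :=
    Filter.Eventually.of_forall fun x hx => Set.indicator_of_notMem hx _
  -- the integral invariance applied to Ψ
  have hUeq := hUinv Ψ hΨmem hΨsupp t Ht
  have hVeq := hVinv Ψ hΨmem hΨsupp t Ht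
  -- pointwise identities for the pulled-back test function
  have hZTeq : ∀ x ∈ St, Ψ (D t T x) = U x t - V x t := by
    rintro x ⟨y, hy, rfl⟩
    rw [(hDinv t Ht).1 y, hΨ_def]
    simp [Set.indicator_of_mem hy]
  have hZT : MemLp (fun x => Ψ (D t T x)) 2 (volume.restrict St) :=
    hWt.ae_eq ((ae_restrict_iff' hStM).2
      (Filter.Eventually.of_forall fun x hx => (hZTeq x hx).symm))
  have hZ0eqWt : ∀ x ∈ S0, Ψ (D 0 T x) = U (D T t (D 0 T x)) t - V (D T t (D 0 T x)) t := by
    rintro x ⟨y, hy, rfl⟩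
    rw [(hDinv 0 h0T).1 y, hΨ_def]
    simp [Set.indicator_of_mem hy]
  have hmapsS0 : ∀ x ∈ S0, D T t (D 0 T x) ∈ St := by
    rintro x ⟨y, hy, rfl⟩
    rw [(hDinv 0 h0T).1 y]
    exact Set.mem_image_of_mem _ hy
  have hinvS0 : ∀ x ∈ S0, (fun z => D T 0 (D t T z)) (D T t (D 0 T x)) = x := by
    intro x _
    simp only []
    rw [(hDinv t Ht).1 (D 0 T x), (hDinv 0 h0T).2 x]
  have hΦcont : Continuous (fun x => D T t (D 0 T x)) :=
    lipDTt.continuous.comp (hDdiffeo 0 h0T).continuous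
  have hZ0aesm : AEStronglyMeasurable (fun x => Ψ (D 0 T x)) (volume.restrict S0) := by
    have hΨuniv : AEStronglyMeasurable Ψ
        (volume.restrict (Set.univ : Set (EuclideanSpace ℝ (Fin d)))) := by
      rwa [Measure.restrict_univ]
    exact aestronglyMeasurable_comp_of_inv (hDdiffeo 0 h0T).continuous lipDT0
      (fun x _ => Set.mem_univ _) (fun x _ => (hDinv 0 h0T).2 x) hΨuniv
  -- the sharp quantitative estimate
  have hZ0sq : ∫⁻ x in S0, ((‖Ψ (D 0 T x)‖₊ : ℝ≥0∞)) ^ (2 : ℕ) ∂volume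
      ≤ (K : ℝ≥0∞) ^ d * ∫⁻ x in St, ((‖U x t - V x t‖₊ : ℝ≥0∞)) ^ (2 : ℕ) ∂volume := by
    have hcongr : ∫⁻ x in S0, ((‖Ψ (D 0 T x)‖₊ : ℝ≥0∞)) ^ (2 : ℕ) ∂volume
        = ∫⁻ x in S0,
            ((‖U (D T t (D 0 T x)) t - V (D T t (D 0 T x)) t‖₊ : ℝ≥0∞)) ^ (2 : ℕ) ∂volume :=
      setLIntegral_congr_fun hS0M
        (fun x hx => by rw [hZ0eqWt x hx])
    rw [hcongr]
    exact setLIntegral_comp_le hΦcont lipRho hmapsS0 hinvS0 hWtsqmeas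
  have hZ0mem : MemLp (fun x => Ψ (D 0 T x)) 2 (volume.restrict S0) := by
    refine ⟨hZ0aesm, ?_⟩
    rw [eLpNorm_two_eq]
    exact ENNReal.rpow_lt_top_of_nonneg (by norm_num)
      (lt_of_le_of_lt hZ0sq (ENNReal.mul_lt_top hKpowTop.lt_top hJfin)).ne
  -- the constant
  have hc : (((K : ℝ≥0∞)) ^ d) ^ (1 / 2 : ℝ)
      = ENNReal.ofReal (Real.exp ((d : ℝ) * L_A * T / 2)) := by
    have h1 : (K : ℝ≥0∞) = ENNReal.ofReal (Real.exp (L_A * T)) := rfl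
    rw [h1, ← ENNReal.ofReal_pow (Real.exp_pos _).le,
      ENNReal.ofReal_rpow_of_pos (by positivity)]
    congr 1
    rw [← Real.rpow_natCast (Real.exp (L_A * T)) d, ← Real.exp_mul, ← Real.exp_mul]
    congr 1
    ring
  have hNZ : eLpNorm (fun x => Ψ (D 0 T x)) 2 (volume.restrict S0)
      ≤ ENNReal.ofReal (Real.exp ((d : ℝ) * L_A * T / 2))
        * eLpNorm (fun x => U x t - V x t) 2 (volume.restrict St) := by
    rw [eLpNorm_two_eq, eLpNorm_two_eq, ← hc,
      ← ENNReal.mul_rpow_of_nonneg _ _ (by norm_num : (0:ℝ) ≤ 1 / 2)]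
    exact ENNReal.rpow_le_rpow hZ0sq (by norm_num)
  -- pass to L² elements
  have hU2 := hUmem t Ht
  have hV2 := hVmem t Ht
  have hU02 : MemLp U₀ 2 (volume.restrict S0) := hU₀.restrict S0
  have hV02 : MemLp V₀ 2 (volume.restrict S0) := hV₀.restrict S0
  have hW0 : MemLp (fun x => U₀ x - V₀ x) 2 (volume.restrict S0) := hU02.sub hV02
  set uT := hU2.toLp (fun x => U x t) with huT
  set vT := hV2.toLp (fun x => V x t) with hvT
  set wT := hWt.toLp (fun x => U x t - V x t) with hwT
  set zT := hZT.toLp (fun x => Ψ (D t T x)) with hzT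
  set u0 := hU02.toLp U₀ with hu0
  set v0 := hV02.toLp V₀ with hv0
  set w0 := hW0.toLp (fun x => U₀ x - V₀ x) with hw0
  set z0 := hZ0mem.toLp (fun x => Ψ (D 0 T x)) with hz0
  have hwT_sub : wT = uT - vT := MemLp.toLp_sub _ _
  have hw0_sub : w0 = u0 - v0 := MemLp.toLp_sub _ _
  have hzTwT : zT = wT :=
    MemLp.toLp_congr hZT hWt ((ae_restrict_iff' hStM).2
      (Filter.Eventually.of_forall fun x hx => hZTeq x hx))
  have key1 : ⟪uT, zT⟫ = ∫ x in St, U x t * Ψ (D t T x) ∂volume := by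
    rw [L2.inner_def]
    refine integral_congr_ae ?_
    filter_upwards [MemLp.coeFn_toLp hU2, MemLp.coeFn_toLp hZT] with x h1 h2
    rw [RCLike.inner_apply, h1, h2]
    simp [mul_comm]
  have key2 : ⟪vT, zT⟫ = ∫ x in St, V x t * Ψ (D t T x) ∂volume := by
    rw [L2.inner_def]
    refine integral_congr_ae ?_
    filter_upwards [MemLp.coeFn_toLp hV2, MemLp.coeFn_toLp hZT] with x h1 h2
    rw [RCLike.inner_apply, h1, h2]
    simp [mul_comm]
  have key3 : ⟪u0, z0⟫ = ∫ x in S0, U₀ x * Ψ (D 0 T x) ∂volume := by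
    rw [L2.inner_def]
    refine integral_congr_ae ?_
    filter_upwards [MemLp.coeFn_toLp hU02, MemLp.coeFn_toLp hZ0mem] with x h1 h2
    rw [RCLike.inner_apply, h1, h2]
    simp [mul_comm]
  have key4 : ⟪v0, z0⟫ = ∫ x in S0, V₀ x * Ψ (D 0 T x) ∂volume := by
    rw [L2.inner_def]
    refine integral_congr_ae ?_
    filter_upwards [MemLp.coeFn_toLp hV02, MemLp.coeFn_toLp hZ0mem] with x h1 h2
    rw [RCLike.inner_apply, h1, h2]
    simp [mul_comm]
  -- the main inequality
  have main : ‖wT‖ ^ 2 ≤ ‖w0‖ * ‖z0‖ := by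
    have e1 : ‖wT‖ ^ 2 = ⟪wT, wT⟫ := (real_inner_self_eq_norm_sq wT).symm
    have e2 : ⟪wT, wT⟫ = ⟪w0, z0⟫ := by
      calc ⟪wT, wT⟫ = ⟪wT, zT⟫ := by rw [hzTwT]
        _ = ⟪uT, zT⟫ - ⟪vT, zT⟫ := by rw [hwT_sub, inner_sub_left]
        _ = ⟪u0, z0⟫ - ⟪v0, z0⟫ := by rw [key1, key2, key3, key4, hUeq, hVeq]
        _ = ⟪w0, z0⟫ := by rw [hw0_sub, inner_sub_left]
    rw [e1, e2]
    exact real_inner_le_norm w0 z0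
  have hz0_le : ‖z0‖ ≤ Real.exp ((d : ℝ) * L_A * T / 2) * ‖wT‖ := by
    rw [hz0, Lp.norm_toLp, hwT, Lp.norm_toLp]
    have h := ENNReal.toReal_mono
      (ENNReal.mul_ne_top ENNReal.ofReal_ne_top hWt.2.ne) hNZ
    rwa [ENNReal.toReal_mul, ENNReal.toReal_ofReal (Real.exp_pos _).le] at h
  -- conclude
  have hgoal : ‖wT‖ ≤ Real.exp ((d : ℝ) * L_A * T / 2) * ‖w0‖ := by
    rcases eq_or_ne ‖wT‖ 0 with h0 | h0
    · rw [h0]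
      positivity
    · have hpos : 0 < ‖wT‖ := lt_of_le_of_ne (norm_nonneg _) (Ne.symm h0)
      have h2 : ‖wT‖ ^ 2 ≤ ‖w0‖ * (Real.exp ((d : ℝ) * L_A * T / 2) * ‖wT‖) :=
        main.trans (mul_le_mul_of_nonneg_left hz0_le (norm_nonneg _))
      nlinarith [h2, hpos, norm_nonneg w0]
  rw [hwT, Lp.norm_toLp, hw0, Lp.norm_toLp] at hgoal
  exact hgoal
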